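/- Let p be a prime, d ≥ 1 an integer, a ∈ ℤ^d with 1 ≤ a_i ≤ p-1 for all i, and ε ∈ {0,1}^{d-1}. Then for every k ∈ ℤ^d with k ≠ 0 and |k_i| ≤ p-1 for all i, one has |Σ_{j=0}^{p-1} Σ_{k'=0}^{p-1} exp(2πi k·z_{j,k'}^{a,ε})| ≤ (d-1)p. -/

import Mathlib

/-- The `i`-th coordinate (for `i = 1,…,d`) of the point `z_{j,k'}^{a,ε}` of the set
`R^{a,ε}_{p²,d}` (with `a'_h = ε_h * a_h`), namely the fractional part of
`((∑_{h=1}^{i-1} a'_h j^{h-1} + a_i j^{i-1}) k') / p`. -/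
noncomputable def rCoord (p : ℕ) (a ε : ℕ → ℤ) (j k' i : ℕ) : ℝ :=
  Int.fract (((((∑ h ∈ Finset.Ico 1 i, ε h * a h * (j : ℤ) ^ (h - 1)) +
      a i * (j : ℤ) ^ (i - 1)) * (k' : ℤ) : ℤ) : ℝ) / (p : ℝ))

private noncomputable def eC (x : ℝ) : ℂ := Complex.exp (2 * Real.pi * Complex.I * x)

private lemma eC_int (n : ℤ) : eC (n : ℝ) = 1 := by
  have h := Complex.exp_int_mul_two_pi_mul_I n
  rw [eC]
  rw [show ((2 : ℂ) * Real.pi * Complex.I * ((n : ℝ) : ℂ)) = (n : ℂ) * (2 * Real.pi * Complex.I) by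
    push_cast; ring]
  exact h

private lemma eC_add (x y : ℝ) : eC (x + y) = eC x * eC y := by
  rw [eC, eC, eC, ← Complex.exp_add]
  congr 1
  push_cast
  ring

private lemma eC_add_int (x : ℝ) (n : ℤ) : eC (x + n) = eC x := by
  rw [eC_add, eC_int, mul_one]

private lemma eC_pow (x : ℝ) (n : ℕ) : eC x ^ n = eC (n * x) := by
  rw [eC, eC, ← Complex.exp_nat_mul]
  congr 1
  push_cast
  ring

private lemma sum_eC (p : ℕ) (hp : 0 < p) (S : ℤ) :
    ∑ k' ∈ Finset.range p, eC (((S * k' : ℤ) : ℝ) / p) =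
      if (p : ℤ) ∣ S then (p : ℂ) else 0 := by
  have hp' : (p : ℝ) ≠ 0 := Nat.cast_ne_zero.mpr hp.ne'
  split_ifs with h
  · obtain ⟨t, rfl⟩ := h
    have h1 : ∀ k' ∈ Finset.range p, eC ((((p : ℤ) * t * k' : ℤ) : ℝ) / p) = 1 := by
      intro k' _
      have : ((((p : ℤ) * t * k' : ℤ) : ℝ) / p) = ((t * k' : ℤ) : ℝ) := by
        push_cast; field_simp
      rw [this, eC_int]
    rw [Finset.sum_congr rfl h1]
    simp
  · have hr : ∀ k' : ℕ, eC (((S * k' : ℤ) : ℝ) / p) = eC ((S : ℝ) / p) ^ k' := by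
      intro k'
      rw [eC_pow]
      congr 1
      push_cast
      ring
    have hne : eC ((S : ℝ) / p) ≠ 1 := by
      intro h1
      rw [eC, Complex.exp_eq_one_iff] at h1
      obtain ⟨n, hn⟩ := h1
      have hnz : (2 : ℂ) * Real.pi * Complex.I ≠ 0 := by
        simp [Real.pi_ne_zero, Complex.I_ne_zero]
      rw [show ((n : ℂ) * (2 * Real.pi * Complex.I)) = (2 * Real.pi * Complex.I) * (n : ℂ) by ring]
        at hn
      have h2 : (((S : ℝ) / p : ℝ) : ℂ) = ((n : ℝ) : ℂ) := by
        have := mul_left_cancel₀ hnz hn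
        rw [this]; norm_num
      have h3 : (S : ℝ) / p = (n : ℝ) := Complex.ofReal_inj.mp h2
      apply h
      refine ⟨n, ?_⟩
      have h4 : (S : ℝ) = ((p * n : ℤ) : ℝ) := by
        push_cast
        field_simp at h3
        linarith [h3]
      exact_mod_cast h4
    rw [Finset.sum_congr rfl fun k' _ => hr k', geom_sum_eq hne]
    have hpow : eC ((S : ℝ) / p) ^ p = 1 := by
      rw [eC_pow]
      rw [show ((p : ℝ) * ((S : ℝ) / p)) = ((S : ℤ) : ℝ) by field_simp]
      exact eC_int S
    rw [hpow]
    simp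

theorem exp_sum_R_set (p d : ℕ) (hp : p.Prime) (hd : 1 ≤ d) (a ε : ℕ → ℤ)
    (ha : ∀ i ∈ Finset.Icc 1 d, 1 ≤ a i ∧ a i ≤ (p : ℤ) - 1)
    (hε : ∀ i ∈ Finset.Icc 1 (d - 1), ε i = 0 ∨ ε i = 1)
    (k : Fin d → ℤ) (hk : k ≠ 0) (hkb : ∀ i, |k i| ≤ (p : ℤ) - 1) :
    ‖∑ j ∈ Finset.range p, ∑ k' ∈ Finset.range p,
        Complex.exp (2 * Real.pi * Complex.I *
          ((∑ i : Fin d, (k i : ℝ) * rCoord p a ε j k' (i.1 + 1) : ℝ) : ℂ))‖ ≤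
      ((d : ℝ) - 1) * p := by
  classical
  haveI : Fact p.Prime := ⟨hp⟩
  have hp0 : 0 < p := hp.pos
  have hpR : (p : ℝ) ≠ 0 := Nat.cast_ne_zero.mpr hp0.ne'
  set m : ℕ → ℕ → ℤ := fun j i =>
    (∑ h ∈ Finset.Ico 1 (i + 1), ε h * a h * (j : ℤ) ^ (h - 1)) + a (i + 1) * (j : ℤ) ^ i
    with hm
  set S : ℕ → ℤ := fun j => ∑ i : Fin d, k i * m j i.1 with hS
  -- inner sum evaluation
  have hinner : ∀ j ∈ Finset.range p, (∑ k' ∈ Finset.range p,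
      Complex.exp (2 * Real.pi * Complex.I *
        ((∑ i : Fin d, (k i : ℝ) * rCoord p a ε j k' (i.1 + 1) : ℝ) : ℂ)))
      = if (p : ℤ) ∣ S j then (p : ℂ) else 0 := by
    intro j _
    rw [← sum_eC p hp0 (S j)]
    refine Finset.sum_congr rfl fun k' _ => ?_
    have hco : ∀ i : Fin d, rCoord p a ε j k' (i.1 + 1)
        = Int.fract (((m j i.1 * k' : ℤ) : ℝ) / p) := by
      intro i
      simp [rCoord, hm]
    have hfr : (∑ i : Fin d, (k i : ℝ) * rCoord p a ε j k' (i.1 + 1))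
        = ((S j * k' : ℤ) : ℝ) / p
          + ((- ∑ i : Fin d, k i * ⌊((m j i.1 * k' : ℤ) : ℝ) / p⌋ : ℤ) : ℝ) := by
      rw [Finset.sum_congr rfl fun i _ => by rw [hco i]]
      simp only [Int.fract, hS]
      push_cast
      simp only [mul_sub]
      rw [Finset.sum_sub_distrib, sub_eq_add_neg]
      congr 1
      rw [Finset.sum_mul, Finset.sum_div]
      exact Finset.sum_congr rfl fun i _ => by ring
    show eC _ = eC _
    rw [hfr, eC_add_int]
  rw [Finset.sum_congr rfl hinner, ← Finset.sum_filter, Finset.sum_const, nsmul_eq_mul]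
  set N := ((Finset.range p).filter fun j => (p : ℤ) ∣ S j).card with hN
  -- root counting bound
  have hNle : N ≤ d - 1 := by
    set P : Polynomial (ZMod p) := ∑ i : Fin d, Polynomial.C ((k i : ZMod p)) *
      ((∑ h ∈ Finset.Ico 1 (i.1 + 1),
          Polynomial.C (((ε h * a h : ℤ) : ZMod p)) * Polynomial.X ^ (h - 1)) +
        Polynomial.C (((a (i.1 + 1) : ℤ) : ZMod p)) * Polynomial.X ^ (i.1)) with hP
    have heval : ∀ j : ℕ, P.eval ((j : ZMod p)) = ((S j : ℤ) : ZMod p) := by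
      intro j
      simp only [hP, hS, hm, Polynomial.eval_finset_sum, Polynomial.eval_mul, Polynomial.eval_add,
        Polynomial.eval_pow, Polynomial.eval_C, Polynomial.eval_X]
      push_cast
      rfl
    have hcoeff : ∀ n : ℕ, P.coeff n = ∑ i : Fin d, (k i : ZMod p) *
        ((if n < i.1 then ((ε (n + 1) * a (n + 1) : ℤ) : ZMod p) else 0) +
         (if n = i.1 then ((a (i.1 + 1) : ℤ) : ZMod p) else 0)) := by
      intro n
      simp only [hP, Polynomial.finset_sum_coeff, Polynomial.coeff_C_mul, Polynomial.coeff_add,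
        Polynomial.coeff_X_pow, mul_ite, mul_one, mul_zero]
      refine Finset.sum_congr rfl fun i _ => ?_
      congr 2
      rw [Finset.sum_Ico_eq_sum_range]
      simp only [Nat.add_sub_cancel_left, Nat.add_sub_cancel]
      rw [Finset.sum_ite_eq (Finset.range i.1) n
        (fun t => ((ε (1 + t) * a (1 + t) : ℤ) : ZMod p))]
      simp only [Finset.mem_range]
      rw [add_comm 1 n]
    -- maximal index with nonzero k
    have hexk : ∃ i, k i ≠ 0 := by
      by_contra hcon
      push_neg at hcon
      exact hk (funext hcon)
    set T : Finset (Fin d) := Finset.univ.filter (fun i => k i ≠ 0) with hT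
    have hTne : T.Nonempty := by
      obtain ⟨i, hi⟩ := hexk
      exact ⟨i, by simp [hT, hi]⟩
    set i0 := T.max' hTne with hi0def
    have hi0 : k i0 ≠ 0 := by
      have := T.max'_mem hTne
      simp only [hT, Finset.mem_filter] at this
      exact this.2
    have hmax : ∀ i : Fin d, i0 < i → k i = 0 := by
      intro i hi
      by_contra hne
      exact absurd (T.le_max' i (by simp [hT, hne])) (not_le.mpr hi)
    have hknz : (k i0 : ZMod p) ≠ 0 := by
      rw [Ne, ZMod.intCast_zmod_eq_zero_iff_dvd]
      intro hdvd
      refine hi0 (Int.eq_zero_of_abs_lt_dvd hdvd ?_)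
      have := hkb i0
      omega
    have hin : i0.1 + 1 ∈ Finset.Icc 1 d := by
      simp only [Finset.mem_Icc]
      exact ⟨Nat.le_add_left 1 i0.1, i0.2⟩
    have hanz : ((a (i0.1 + 1) : ℤ) : ZMod p) ≠ 0 := by
      rw [Ne, ZMod.intCast_zmod_eq_zero_iff_dvd]
      intro hdvd
      obtain ⟨h1, h2⟩ := ha (i0.1 + 1) hin
      have := Int.eq_zero_of_abs_lt_dvd hdvd (by rw [abs_of_pos (by linarith)]; omega)
      omega
    have hPcoeff : P.coeff i0.1 = (k i0 : ZMod p) * ((a (i0.1 + 1) : ℤ) : ZMod p) := by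
      rw [hcoeff]
      rw [Finset.sum_eq_single i0]
      · simp
      · intro i _ hne
        rcases lt_trichotomy i i0 with hlt | heq | hgt
        · have h1 : ¬ (i0.1 < i.1) := not_lt.mpr (le_of_lt hlt)
          have h2 : i0.1 ≠ i.1 := fun hc => hne (Fin.ext hc.symm)
          simp [h1, h2]
        · exact absurd heq hne
        · simp [hmax i hgt]
      · simp
    have hcne : P.coeff i0.1 ≠ 0 := by
      rw [hPcoeff]
      exact mul_ne_zero hknz hanz
    have hPne : P ≠ 0 := fun h0 => hcne (by simp [h0])
    have hdeg : P.natDegree ≤ d - 1 := by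
      rw [Polynomial.natDegree_le_iff_coeff_eq_zero]
      intro M hM
      rw [hcoeff]
      apply Finset.sum_eq_zero
      intro i _
      have hi : i.1 < d := i.2
      have h1 : ¬ (M < i.1) := by omega
      have h2 : M ≠ i.1 := by omega
      simp [h1, h2]
    calc N ≤ P.roots.toFinset.card := by
          apply Finset.card_le_card_of_injOn (fun j => ((j : ℕ) : ZMod p))
          · intro j hj
            simp only [Finset.mem_coe, Finset.mem_filter, Finset.mem_range] at hj ⊢
            rw [Multiset.mem_toFinset, Polynomial.mem_roots']
            refine ⟨hPne, ?_⟩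
            rw [Polynomial.IsRoot, heval j, ZMod.intCast_zmod_eq_zero_iff_dvd]
            exact hj.2
          · intro j1 h1 j2 h2 heq
            simp only [Finset.coe_filter, Set.mem_setOf_eq, Finset.mem_range] at h1 h2
            have := congrArg ZMod.val heq
            rwa [ZMod.val_cast_of_lt h1.1, ZMod.val_cast_of_lt h2.1] at this
      _ ≤ Multiset.card P.roots := P.roots.toFinset_card_le
      _ ≤ P.natDegree := P.card_roots'
      _ ≤ d - 1 := hdeg
  -- conclude
  have habs : ‖(N : ℂ) * (p : ℂ)‖ = (N : ℝ) * p := by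
    rw [norm_mul, Complex.norm_natCast, Complex.norm_natCast]
  rw [habs]
  have hNr : (N : ℝ) ≤ (d : ℝ) - 1 := by
    have := (Nat.cast_le (α := ℝ)).mpr hNle
    rwa [Nat.cast_sub hd, Nat.cast_one] at this
  exact mul_le_mul_of_nonneg_right hNr (Nat.cast_nonneg p)
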